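/- For n = 3 and for both sign choices, the identity A_{22}^± ∘ 𝒱_2 ∘ A_{21}^± = A_{21}^± ∘ 𝒱_2 ∘ A_{22}^± holds in End_ℂ(L). -/

import Mathlib

open scoped BigOperators
open MvPolynomial


noncomputable section

/-- The polynomial ring `Λ = ℂ[x_{ki}]` (variables indexed by pairs `(k, i)`). -/
abbrev Lam : Type := MvPolynomial (ℕ × ℕ) ℂ

/-- `L`, the field of fractions of `Λ`. -/
abbrev L : Type := FractionRing Lam

/-- The variable `x_{ki}` as an element of `L`. -/
def x (k i : ℕ) : L := algebraMap Lam L (X (k, i))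

/-- The algebra automorphism of `Λ` sending `x_v ↦ x_v - 1` and fixing the other variables. -/
def shiftEquiv (v : ℕ × ℕ) : Lam ≃ₐ[ℂ] Lam :=
  AlgEquiv.ofAlgHom
    (aeval (fun w => if w = v then X w - 1 else X w))
    (aeval (fun w => if w = v then X w + 1 else X w))
    (by apply MvPolynomial.algHom_ext; intro w; by_cases h : w = v <;> simp [h])
    (by apply MvPolynomial.algHom_ext; intro w; by_cases h : w = v <;> simp [h])

/-- The automorphism `δ^{ki}` of `L`, determined by `δ^{ki}(x_{ℓj}) = x_{ℓj} - δ_{ℓk}δ_{ij}`. -/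
def δ (k i : ℕ) : L ≃ₐ[ℂ] L := IsFractionRing.algEquivOfAlgEquiv (shiftEquiv (k, i))

/-- Multiplication by `a ∈ L` as a `ℂ`-linear endomorphism `m_a` of `L`. -/
def mulOp (a : L) : Module.End ℂ L := LinearMap.mulLeft ℂ a

/-- A field automorphism of `L` as a `ℂ`-linear endomorphism of `L`. -/
def lin (e : L ≃ₐ[ℂ] L) : Module.End ℂ L := e.toLinearMap

/-- The rational function `a_{ki}^+`. -/
def aP (k i : ℕ) : L :=
  -((∏ j ∈ Finset.Icc 1 (k + 1), (x (k + 1) j - x k i)) /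
    ∏ j ∈ (Finset.Icc 1 k).erase i, (x k j - x k i))

/-- The rational function `a_{ki}^-`. -/
def aM (k i : ℕ) : L :=
  (∏ j ∈ Finset.Icc 1 (k - 1), (x (k - 1) j - x k i)) /
    ∏ j ∈ (Finset.Icc 1 k).erase i, (x k j - x k i)

/-- The operator `A_{ki}^+ = δ^{ki} ∘ m_{a_{ki}^+}`. -/
def Ap (k i : ℕ) : Module.End ℂ L := lin (δ k i) * mulOp (aP k i)

/-- The operator `A_{ki}^- = (δ^{ki})^{-1} ∘ m_{a_{ki}^-}`. -/
def Am (k i : ℕ) : Module.End ℂ L := lin (δ k i).symm * mulOp (aM k i)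

/-- The operator `X_k^+ = ∑_{i=1}^k A_{ki}^+`. -/
def Xp (k : ℕ) : Module.End ℂ L := ∑ i ∈ Finset.Icc 1 k, Ap k i

/-- The operator `X_k^- = ∑_{i=1}^k A_{ki}^-`. -/
def Xm (k : ℕ) : Module.End ℂ L := ∑ i ∈ Finset.Icc 1 k, Am k i

/-- The operator `X_{kk}`. -/
def Xd (k : ℕ) : Module.End ℂ L :=
  mulOp ((∑ j ∈ Finset.Icc 1 k, (x k j + (j : L) - 1)) -
    ∑ i ∈ Finset.Icc 1 (k - 1), (x (k - 1) i + (i : L) - 1))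

/-- The Vandermonde polynomial `∏_{1 ≤ i < j ≤ k} (x_{ki} - x_{kj})`, as an element of `L`. -/
def vand (k : ℕ) : L :=
  ∏ p ∈ (Finset.Icc 1 k ×ˢ Finset.Icc 1 k).filter (fun p => p.1 < p.2),
    (x k p.1 - x k p.2)

/-- The operator `𝒱_k = m_{∏_{i<j}(x_{ki} - x_{kj})}`. -/
def Vop (k : ℕ) : Module.End ℂ L := mulOp (vand k)

/-- The generating set of `U_n`: the `X_k^±` for `1 ≤ k ≤ n-1` and the `X_{kk}` for `1 ≤ k ≤ n`. -/
def Ugens (n : ℕ) : Set (Module.End ℂ L) :=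
  {u | ∃ k, 1 ≤ k ∧ k + 1 ≤ n ∧ (u = Xp k ∨ u = Xm k)} ∪
    {u | ∃ k, 1 ≤ k ∧ k ≤ n ∧ u = Xd k}

/-- `U_n`, the Gelfand–Tsetlin realization of `U(gl_n)` inside `End_ℂ(L)`. -/
def Ualg (n : ℕ) : Subalgebra ℂ (Module.End ℂ L) := Algebra.adjoin ℂ (Ugens n)

/-- `𝒜(gl_n)`, the subalgebra generated by `U_n` together with `𝒱_2, …, 𝒱_n`. -/
def Agl (n : ℕ) : Subalgebra ℂ (Module.End ℂ L) :=
  Algebra.adjoin ℂ (Ugens n ∪ {u | ∃ k, 2 ≤ k ∧ k ≤ n ∧ u = Vop k})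

set_option synthInstance.maxHeartbeats 1000000
set_option maxHeartbeats 1000000

lemma shiftEquiv_X (v w : ℕ × ℕ) :
    shiftEquiv v (X w) = if w = v then X w - 1 else X w := by
  simp [shiftEquiv]

lemma δ_x (k i l j : ℕ) :
    δ k i (x l j) = if (l, j) = (k, i) then x l j - 1 else x l j := by
  rw [δ, x, IsFractionRing.algEquivOfAlgEquiv_algebraMap, shiftEquiv_X]
  split <;> simp [x, map_sub]

lemma δ_symm_x (k i l j : ℕ) :
    (δ k i).symm (x l j) = if (l, j) = (k, i) then x l j + 1 else x l j := by
  rw [AlgEquiv.symm_apply_eq]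
  by_cases h : (l, j) = (k, i)
  · rw [if_pos h, map_add, δ_x, if_pos h, map_one]; ring
  · rw [if_neg h, δ_x, if_neg h]

lemma x_sub_ne (k i l j : ℕ) (h : (k, i) ≠ (l, j)) : x k i - x l j ≠ 0 := by
  rw [x, x, ← map_sub]
  intro hc
  have h2 : (X (k, i) : Lam) - X (l, j) = 0 :=
    IsFractionRing.injective Lam L (by simpa using hc)
  exact h (MvPolynomial.X_injective (sub_eq_zero.mp h2))

lemma δ_comm_apply (z : L) : δ 2 1 (δ 2 2 z) = δ 2 2 (δ 2 1 z) := by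
  have h : ((δ 2 1).toRingEquiv.toRingHom.comp (δ 2 2).toRingEquiv.toRingHom)
      = ((δ 2 2).toRingEquiv.toRingHom.comp (δ 2 1).toRingEquiv.toRingHom) := by
    apply IsLocalization.ringHom_ext (nonZeroDivisors Lam)
    apply MvPolynomial.ringHom_ext
    · intro c
      have hc : (algebraMap Lam L) (C c) = algebraMap ℂ L c := by
        rw [IsScalarTower.algebraMap_apply ℂ Lam L, MvPolynomial.algebraMap_eq]
      simp [RingHom.comp_apply, hc, AlgEquiv.commutes]
    · intro w
      have hw : (algebraMap Lam L) (X w) = x w.1 w.2 := rfl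
      by_cases h1 : w = (2, 2) <;> by_cases h2 : w = (2, 1) <;>
        simp_all [RingHom.comp_apply, hw, δ_x, map_sub]
  exact RingHom.congr_fun h z

lemma δ_symm_comm_apply (z : L) :
    (δ 2 1).symm ((δ 2 2).symm z) = (δ 2 2).symm ((δ 2 1).symm z) := by
  apply (δ 2 2).injective
  apply (δ 2 1).injective
  rw [δ_comm_apply]
  simp

lemma key_op (e f : L ≃ₐ[ℂ] L) (a b v : L) :
    (lin e * mulOp a) * mulOp v * (lin f * mulOp b)
      = (lin e * lin f) * mulOp (f.symm (a * v) * b) := by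
  ext z
  simp only [lin, mulOp, Module.End.mul_apply, LinearMap.mulLeft_apply,
    AlgEquiv.toLinearMap_apply, map_mul, AlgEquiv.apply_symm_apply]
  ring

lemma vand_two : vand 2 = x 2 1 - x 2 2 := by
  rw [vand, show ((Finset.Icc 1 2 ×ˢ Finset.Icc 1 2).filter
      (fun p : ℕ × ℕ => p.1 < p.2)) = {(1, 2)} by decide, Finset.prod_singleton]

lemma aP21 : aP 2 1 =
    -(((x 3 1 - x 2 1) * ((x 3 2 - x 2 1) * (x 3 3 - x 2 1))) / (x 2 2 - x 2 1)) := by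
  rw [aP, show (Finset.Icc 1 3 : Finset ℕ) = {1, 2, 3} from rfl,
    show ((Finset.Icc 1 2).erase 1 : Finset ℕ) = {2} from rfl]
  rw [Finset.prod_insert (by decide), Finset.prod_insert (by decide),
    Finset.prod_singleton, Finset.prod_singleton]

lemma aP22 : aP 2 2 =
    -(((x 3 1 - x 2 2) * ((x 3 2 - x 2 2) * (x 3 3 - x 2 2))) / (x 2 1 - x 2 2)) := by
  rw [aP, show (Finset.Icc 1 3 : Finset ℕ) = {1, 2, 3} from rfl,
    show ((Finset.Icc 1 2).erase 2 : Finset ℕ) = {1} from rfl]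
  rw [Finset.prod_insert (by decide), Finset.prod_insert (by decide),
    Finset.prod_singleton, Finset.prod_singleton]

lemma aM21 : aM 2 1 = (x 1 1 - x 2 1) / (x 2 2 - x 2 1) := by
  rw [aM, show (Finset.Icc 1 1 : Finset ℕ) = {1} from rfl,
    show ((Finset.Icc 1 2).erase 1 : Finset ℕ) = {2} from rfl,
    Finset.prod_singleton, Finset.prod_singleton]

lemma aM22 : aM 2 2 = (x 1 1 - x 2 2) / (x 2 1 - x 2 2) := by
  rw [aM, show (Finset.Icc 1 1 : Finset ℕ) = {1} from rfl,
    show ((Finset.Icc 1 2).erase 2 : Finset ℕ) = {1} from rfl,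
    Finset.prod_singleton, Finset.prod_singleton]

lemma lin_δ_comm : lin (δ 2 2) * lin (δ 2 1) = lin (δ 2 1) * lin (δ 2 2) := by
  ext z
  simp only [lin, Module.End.mul_apply, AlgEquiv.toLinearMap_apply]
  exact (δ_comm_apply z).symm

lemma lin_δ_symm_comm :
    lin (δ 2 2).symm * lin (δ 2 1).symm = lin (δ 2 1).symm * lin (δ 2 2).symm := by
  ext z
  simp only [lin, Module.End.mul_apply, AlgEquiv.toLinearMap_apply]
  exact (δ_symm_comm_apply z).symm


lemma Lnm (a b : L) : -a * b = -(a * b) := neg_mul a b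
lemma Lmn (a b : L) : a * -b = -(a * b) := mul_neg a b
lemma Lnn (a : L) : - -a = a := neg_neg a
lemma Lmapneg (e : L ≃ₐ[ℂ] L) (a : L) : e (-a) = -(e a) := map_neg e a

lemma helper1 {F : Type*} [Field F] (a b c y z : F) (h1 : y - z ≠ 0) (h2 : z - y ≠ 0) :
    -((a - z) * ((b - z) * (c - z))) * -((a - y) * ((b - y) * (c - y)) / (z - y)) =
      (a - y) * ((b - y) * (c - y)) * -((a - z) * ((b - z) * (c - z)) / (y - z)) := by
  field_simp
  ring

lemma helper2 {F : Type*} [Field F] (w y z : F) (h1 : y - z ≠ 0) (h2 : z - y ≠ 0) :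
    (w - z) * ((w - y) / (z - y)) = (y - w) * ((w - z) / (y - z)) := by
  field_simp
  ring

lemma val_plus :
    (δ 2 1).symm (aP 2 2 * vand 2) * aP 2 1 = (δ 2 2).symm (aP 2 1 * vand 2) * aP 2 2 := by
  have hd : x 2 1 - x 2 2 ≠ 0 := x_sub_ne 2 1 2 2 (by decide)
  have hd' : x 2 2 - x 2 1 ≠ 0 := x_sub_ne 2 2 2 1 (by decide)
  have hsw : x 2 1 - x 2 2 = -(x 2 2 - x 2 1) := by ring
  rw [vand_two, aP21, aP22]
  have e1 : -((x 3 1 - x 2 2) * ((x 3 2 - x 2 2) * (x 3 3 - x 2 2)) / (x 2 1 - x 2 2)) *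
      (x 2 1 - x 2 2) = -((x 3 1 - x 2 2) * ((x 3 2 - x 2 2) * (x 3 3 - x 2 2))) := by
    rw [Lnm, div_mul_cancel₀ _ hd]
  have e2 : -((x 3 1 - x 2 1) * ((x 3 2 - x 2 1) * (x 3 3 - x 2 1)) / (x 2 2 - x 2 1)) *
      (x 2 1 - x 2 2) = (x 3 1 - x 2 1) * ((x 3 2 - x 2 1) * (x 3 3 - x 2 1)) := by
    rw [hsw, Lmn, Lnm, Lnn, div_mul_cancel₀ _ hd']
  rw [e1, e2, Lmapneg]
  simp only [map_mul, map_sub, δ_symm_x, Prod.mk.injEq]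
  norm_num
  have h := helper1 (x 3 1) (x 3 2) (x 3 3) (x 2 1) (x 2 2) hd hd'
  rw [neg_mul_neg, mul_neg] at h
  exact h

lemma val_minus :
    δ 2 1 (aM 2 2 * vand 2) * aM 2 1 = δ 2 2 (aM 2 1 * vand 2) * aM 2 2 := by
  have hd : x 2 1 - x 2 2 ≠ 0 := x_sub_ne 2 1 2 2 (by decide)
  have hd' : x 2 2 - x 2 1 ≠ 0 := x_sub_ne 2 2 2 1 (by decide)
  have hsw : x 2 1 - x 2 2 = -(x 2 2 - x 2 1) := by ring
  rw [vand_two, aM21, aM22]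
  have e1 : (x 1 1 - x 2 2) / (x 2 1 - x 2 2) * (x 2 1 - x 2 2) = x 1 1 - x 2 2 :=
    div_mul_cancel₀ _ hd
  have e2 : (x 1 1 - x 2 1) / (x 2 2 - x 2 1) * (x 2 1 - x 2 2) = -(x 1 1 - x 2 1) := by
    rw [hsw, Lmn, div_mul_cancel₀ _ hd']
  rw [e1, e2, Lmapneg]
  simp only [map_sub, δ_x, Prod.mk.injEq]
  norm_num
  exact helper2 (x 1 1) (x 2 1) (x 2 2) hd hd'

/-- `A_{22}^± ∘ 𝒱_2 ∘ A_{21}^± = A_{21}^± ∘ 𝒱_2 ∘ A_{22}^±` for both signs. -/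
theorem A22_V2_A21_symmetry :
    Ap 2 2 * Vop 2 * Ap 2 1 = Ap 2 1 * Vop 2 * Ap 2 2 ∧
    Am 2 2 * Vop 2 * Am 2 1 = Am 2 1 * Vop 2 * Am 2 2 := by
  constructor
  · show (lin (δ 2 2) * mulOp (aP 2 2)) * mulOp (vand 2) * (lin (δ 2 1) * mulOp (aP 2 1)) =
      (lin (δ 2 1) * mulOp (aP 2 1)) * mulOp (vand 2) * (lin (δ 2 2) * mulOp (aP 2 2))
    rw [key_op, key_op, lin_δ_comm, val_plus]
  · show (lin (δ 2 2).symm * mulOp (aM 2 2)) * mulOp (vand 2) *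
        (lin (δ 2 1).symm * mulOp (aM 2 1)) =
      (lin (δ 2 1).symm * mulOp (aM 2 1)) * mulOp (vand 2) *
        (lin (δ 2 2).symm * mulOp (aM 2 2))
    rw [key_op, key_op, AlgEquiv.symm_symm, AlgEquiv.symm_symm, lin_δ_symm_comm, val_minus]
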